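/- Suppose a function V : [0,∞)^d → ℝ satisfies both inequalities V(y) ≤ V(x) - f(x)·(x-y)^+ + g(x)·(x-y)^- and V(x) ≤ V(y) - f(y)·(y-x)^+ + g(y)·(y-x)^- for all x, y ∈ [0,∞)^d, where f, g : [0,∞)^d → (0,∞)^d are componentwise non-increasing. If V(0) < ∞, then V(x) < ∞ for all x, and V is Lipschitz continuous with Lipschitz constant 2|f(0) + g(0)| (with respect to the appropriate norms). -/
import Mathlib


/-- If `V` satisfies the two shift inequalities with positive,
componentwise non-increasing `f, g`, then `V` is Lipschitz with constant
`2|f(0)+g(0)|` (here the ℓ¹ norm of `f 0 + g 0` paired with the sup norm on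
`Fin d → ℝ`). Since `V` is real-valued, finiteness is automatic. -/
theorem stmt1 {d : ℕ} (V : (Fin d → ℝ) → ℝ) (f g : (Fin d → ℝ) → Fin d → ℝ)
    (hfpos : ∀ x i, 0 < f x i) (hgpos : ∀ x i, 0 < g x i)
    (hfmono : ∀ x y : Fin d → ℝ, (∀ i, x i ≤ y i) → ∀ i, f y i ≤ f x i)
    (hgmono : ∀ x y : Fin d → ℝ, (∀ i, x i ≤ y i) → ∀ i, g y i ≤ g x i)
    (hineq : ∀ x y : Fin d → ℝ, (∀ i, 0 ≤ x i) → (∀ i, 0 ≤ y i) →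
      V y ≤ V x - (∑ i, f x i * max (x i - y i) 0)
        + (∑ i, g x i * max (-(x i - y i)) 0))
    (x y : Fin d → ℝ) (hx : ∀ i, 0 ≤ x i) (hy : ∀ i, 0 ≤ y i) :
    |V x - V y| ≤ 2 * (∑ i, (f 0 i + g 0 i)) * ‖x - y‖ := by
  have key : ∀ a b : Fin d → ℝ, (∀ i, 0 ≤ a i) → (∀ i, 0 ≤ b i) →
      V a - V b ≤ (∑ i, g 0 i) * ‖a - b‖ := by
    intro a b ha hb
    have h1 := hineq b a hb ha
    have h2 : V a - V b ≤ ∑ i, g b i * max (-(b i - a i)) 0 := by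
      have hf : 0 ≤ ∑ i, f b i * max (b i - a i) 0 :=
        Finset.sum_nonneg fun i _ =>
          mul_nonneg (hfpos b i).le (le_max_right _ _)
      linarith
    have h3 : ∑ i, g b i * max (-(b i - a i)) 0 ≤ (∑ i, g 0 i) * ‖a - b‖ := by
      rw [Finset.sum_mul]
      apply Finset.sum_le_sum
      intro i _
      have hg0 : g b i ≤ g 0 i := hgmono 0 b (fun i => hb i) i
      have hm : max (-(b i - a i)) 0 ≤ ‖a - b‖ := by
        have : |(a - b) i| ≤ ‖a - b‖ := norm_le_pi_norm (a - b) i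
        simp only [Pi.sub_apply] at this
        have := neg_abs_le (a i - b i)
        have := le_abs_self (a i - b i)
        have hn : (0:ℝ) ≤ ‖a - b‖ := norm_nonneg _
        apply max_le <;> nlinarith [abs_nonneg (a i - b i)]
      exact mul_le_mul hg0 hm (le_max_right _ _) (hgpos 0 i).le
    linarith
  have hxy := key x y hx hy
  have hyx := key y x hy hx
  rw [show y - x = -(x - y) by ring, norm_neg] at hyx
  have hsum : (∑ i, g 0 i) ≤ 2 * ∑ i, (f 0 i + g 0 i) := by
    have h1 : (0:ℝ) ≤ ∑ i, (f 0 i + g 0 i) :=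
      Finset.sum_nonneg fun i _ => add_nonneg (hfpos 0 i).le (hgpos 0 i).le
    have h2 : (∑ i, g 0 i) ≤ ∑ i, (f 0 i + g 0 i) :=
      Finset.sum_le_sum fun i _ => by nlinarith [hfpos 0 i]
    linarith
  have hn : (0:ℝ) ≤ ‖x - y‖ := norm_nonneg _
  rw [abs_sub_le_iff]
  constructor <;> nlinarith
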